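/- For 0 < a, b and a+b < 1, Γ_Y(a,b) = (a+b)/(1-a-b) + (1-a)/a - (1-b)/b < 0 if and only if b < √5 - 2 and a ∈ (a_-(b), a_+(b)), where a_±(b) = (1/2)(1 - b ± √(b⁴+4b³-2b²-4b+1)/(1+b)). -/

import Mathlib

set_option maxHeartbeats 1000000


theorem GammaY_neg_iff (a b : ℝ) (ha : 0 < a) (hb : 0 < b) (hab : a + b < 1) :
    (a + b)/(1 - a - b) + (1 - a)/a - (1 - b)/b < 0 ↔
      b < Real.sqrt 5 - 2 ∧
      a ∈ Set.Ioo
        ((1/2) * (1 - b - Real.sqrt (b^4 + 4*b^3 - 2*b^2 - 4*b + 1) / (1 + b)))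
        ((1/2) * (1 - b + Real.sqrt (b^4 + 4*b^3 - 2*b^2 - 4*b + 1) / (1 + b))) := by
  have hb1 : b < 1 := by linarith
  have hc : 0 < 1 - a - b := by linarith
  have h1b : (0:ℝ) < 1 + b := by linarith
  have hpos : 0 < a * b * (1 - a - b) := by positivity
  have key : ((a + b)/(1 - a - b) + (1 - a)/a - (1 - b)/b) * (a*b*(1-a-b))
      = (1+b)*a^2 - (1-b^2)*a + b*(1-b) := by
    field_simp
    ring
  have hiff : ((a + b)/(1 - a - b) + (1 - a)/a - (1 - b)/b < 0) ↔
      (1+b)*a^2 - (1-b^2)*a + b*(1-b) < 0 := by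
    rw [← key]
    constructor
    · intro h; exact mul_neg_of_neg_of_pos h hpos
    · intro h
      by_contra h'
      push_neg at h'
      nlinarith [mul_nonneg h' hpos.le]
  rw [hiff]
  have hsqrt5 : b < Real.sqrt 5 - 2 ↔ b^2 + 4*b - 1 < 0 := by
    have h2 : (0:ℝ) ≤ b + 2 := by linarith
    have := Real.lt_sqrt h2 (y := 5)
    constructor
    · intro h
      have hlt : b + 2 < Real.sqrt 5 := by linarith
      nlinarith [this.1 hlt]
    · intro h
      have : b + 2 < Real.sqrt 5 := this.2 (by nlinarith)
      linarith
  by_cases hcase : b^2 + 4*b - 1 < 0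
  · have hDpos : (0:ℝ) < b^4 + 4*b^3 - 2*b^2 - 4*b + 1 := by nlinarith
    set s := Real.sqrt (b^4 + 4*b^3 - 2*b^2 - 4*b + 1) with hs_def
    have hs : s ^ 2 = b^4 + 4*b^3 - 2*b^2 - 4*b + 1 := Real.sq_sqrt hDpos.le
    have hspos : 0 < s := Real.sqrt_pos.2 hDpos
    constructor
    · intro h
      have hineq : (2*(1+b)*a - (1-b^2))^2 < s^2 := by nlinarith
      have hx1 : -s < 2*(1+b)*a - (1-b^2) := by nlinarith
      have hx2 : 2*(1+b)*a - (1-b^2) < s := by nlinarith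
      refine ⟨hsqrt5.2 hcase, ?_, ?_⟩
      · have h1 : 1 - b - 2*a < s / (1+b) := by
          rw [lt_div_iff₀ h1b]; nlinarith
        linarith
      · have h2 : 2*a - (1-b) < s / (1+b) := by
          rw [lt_div_iff₀ h1b]; nlinarith
        linarith
    · rintro ⟨-, h1, h2⟩
      have h1' : (1 - b - 2*a) * (1+b) < s := by
        have : 1 - b - 2*a < s / (1+b) := by linarith
        rwa [lt_div_iff₀ h1b] at this
      have h2' : (2*a - (1-b)) * (1+b) < s := by
        have : 2*a - (1-b) < s / (1+b) := by linarith
        rwa [lt_div_iff₀ h1b] at this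
      nlinarith [mul_pos (by linarith : 0 < s - (2*(1+b)*a - (1-b^2)))
        (by linarith : 0 < s + (2*(1+b)*a - (1-b^2)))]
  · rw [hsqrt5]
    simp only [hcase, false_and, iff_false, not_lt]
    push_neg at hcase
    nlinarith [sq_nonneg (2*(1+b)*a - (1-b^2)), mul_nonneg (mul_nonneg (by linarith : (0:ℝ) ≤ 1-b) h1b.le) hcase]
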